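/- Let X be a real vector space, {ρ_λ : λ ∈ Λ} a pointwise bounded family of seminorms inducing a Hausdorff topology τ', and τ the topology of the norm ‖x‖ := sup_λ ρ_λ(x). Assume the unit ball X¹ of (X,‖·‖) is τ'-compact. Then a subset C of X is closed in the mixed topology γ[τ,τ'] if and only if C ∩ rX¹ is γ[τ,τ']-closed for every r > 0. -/

import Mathlib

open Pointwise

/-- The basic "mixed" neighbourhoods of `0`: `⋃ n, ∑_{i=1}^n (U'_i ∩ i·U)`. -/
def mixBall {X : Type*} [AddCommGroup X] [Module ℝ X] (U' : ℕ → Set X) (U : Set X) : Set X :=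
  ⋃ n : ℕ, ∑ i ∈ Finset.range n, (U' (i + 1) ∩ (((i : ℝ) + 1) • U))

/-- The mixed topology `γ[t, t']` of Wiweger: the topology whose neighbourhoods of a point `x`
are generated by the translates `x + mixBall U' U`, where `U'` is a sequence of
`t'`-neighbourhoods of `0` and `U` is a `t`-neighbourhood of `0`. -/
def mixedTopology {X : Type*} [AddCommGroup X] [Module ℝ X]
    (t t' : TopologicalSpace X) : TopologicalSpace X :=
  TopologicalSpace.generateFrom
    {V | ∀ x ∈ V, ∃ (U' : ℕ → Set X) (U : Set X),
      (∀ n, U' n ∈ @nhds X t' 0) ∧ U ∈ @nhds X t 0 ∧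
      ∀ y ∈ mixBall U' U, x + y ∈ V}

namespace Stmt11

open Topology

variable {X : Type*} [AddCommGroup X] [Module ℝ X]

/-- The generating collection of the mixed topology. -/
def mixGen (t t' : TopologicalSpace X) : Set (Set X) :=
  {V | ∀ x ∈ V, ∃ (U' : ℕ → Set X) (U : Set X),
      (∀ n, U' n ∈ @nhds X t' 0) ∧ U ∈ @nhds X t 0 ∧
      ∀ y ∈ mixBall U' U, x + y ∈ V}

theorem sum_sets_mono {S T : ℕ → Set X} (h : ∀ i, S i ⊆ T i) (n : ℕ) :
    ∑ i ∈ Finset.range n, S i ⊆ ∑ i ∈ Finset.range n, T i := by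
  induction n with
  | zero => simp
  | succ n ih =>
      rw [Finset.sum_range_succ, Finset.sum_range_succ]
      exact Set.add_subset_add ih (h n)

theorem zero_mem_sum_sets {S : ℕ → Set X} (h : ∀ i, (0 : X) ∈ S i) (n : ℕ) :
    (0 : X) ∈ ∑ i ∈ Finset.range n, S i := by
  induction n with
  | zero => simp [Set.mem_zero]
  | succ n ih =>
      rw [Finset.sum_range_succ]
      simpa using Set.add_mem_add ih (h n)

theorem single_subset_sum_sets {S : ℕ → Set X} (h : ∀ i, (0 : X) ∈ S i) {j n : ℕ} (hj : j < n) :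
    S j ⊆ ∑ i ∈ Finset.range n, S i := by
  induction n with
  | zero => omega
  | succ n ih =>
      rw [Finset.sum_range_succ]
      rcases Nat.lt_succ_iff_lt_or_eq.mp hj with hj' | hj'
      · intro y hy
        simpa using Set.add_mem_add (ih hj' hy) (h n)
      · subst hj'
        intro y hy
        simpa using Set.add_mem_add (zero_mem_sum_sets h j) hy

theorem mixBall_mono {U' V' : ℕ → Set X} {U V : Set X} (h' : ∀ n, U' n ⊆ V' n) (h : U ⊆ V) :
    mixBall U' U ⊆ mixBall V' V := by
  refine Set.iUnion_mono fun n => sum_sets_mono (fun i => ?_) n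
  exact Set.inter_subset_inter (h' _) (Set.smul_set_mono h)

theorem isOpen_mixed_iff (t t' : TopologicalSpace X) (V : Set X) :
    IsOpen[mixedTopology t t'] V ↔ V ∈ mixGen t t' := by
  constructor
  · intro hV
    induction hV with
    | basic _ h => exact h
    | univ =>
        intro x _
        exact ⟨fun _ => Set.univ, Set.univ, fun _ => Filter.univ_mem, Filter.univ_mem,
          fun y _ => Set.mem_univ _⟩
    | inter V₁ V₂ _ _ ih₁ ih₂ =>
        intro x hx
        obtain ⟨U₁', U₁, hU₁', hU₁, hsub₁⟩ := ih₁ x hx.1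
        obtain ⟨U₂', U₂, hU₂', hU₂, hsub₂⟩ := ih₂ x hx.2
        refine ⟨fun n => U₁' n ∩ U₂' n, U₁ ∩ U₂, fun n => Filter.inter_mem (hU₁' n) (hU₂' n),
          Filter.inter_mem hU₁ hU₂, fun y hy => ?_⟩
        exact ⟨hsub₁ y (mixBall_mono (fun n => Set.inter_subset_left) Set.inter_subset_left hy),
          hsub₂ y (mixBall_mono (fun n => Set.inter_subset_right) Set.inter_subset_right hy)⟩
    | sUnion T _ ih =>
        intro x hx
        obtain ⟨W, hW, hxW⟩ := hx
        obtain ⟨U', U, h1, h2, h3⟩ := ih W hW x hxW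
        exact ⟨U', U, h1, h2, fun y hy => ⟨W, hW, h3 y hy⟩⟩
  · exact fun h => TopologicalSpace.GenerateOpen.basic V h

theorem sum_shift (f : ℕ → Set X) (hsplit : ∀ m, f (m + 1) + f (m + 1) ⊆ f m)
    (h0 : ∀ m, (0 : X) ∈ f m) :
    ∀ (n k : ℕ), ∑ i ∈ Finset.range n, f (k + 1 + i) ⊆ f k := by
  intro n
  induction n with
  | zero =>
      intro k y hy
      simp only [Finset.range_zero, Finset.sum_empty] at hy
      rw [Set.mem_zero] at hy
      subst hy; exact h0 k
  | succ n ih =>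
      intro k
      rw [Finset.sum_range_succ']
      have h1 : ∑ i ∈ Finset.range n, f (k + 1 + (i + 1)) ⊆ f (k + 1) := by
        refine subset_trans (le_of_eq ?_) (ih (k + 1))
        exact Finset.sum_congr rfl fun i _ => by ring_nf
      refine subset_trans (Set.add_subset_add h1 ?_) (hsplit k)
      simp [Set.subset_def]

/-- In a topological additive group `t'`, every `t'`-open set satisfies the mixed-neighbourhood
condition (for an arbitrary companion topology `t`). -/
theorem mem_mixGen_of_open {t' : TopologicalSpace X} (hg : @IsTopologicalAddGroup X t' _)
    (t : TopologicalSpace X) {V : Set X} (hV : IsOpen[t'] V) : V ∈ mixGen t t' := by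
  letI := t'
  haveI := hg
  intro x hx
  have hW : (x + ·) ⁻¹' V ∈ 𝓝 (0 : X) := by
    have h1 : V ∈ 𝓝 x := hV.mem_nhds hx
    rw [← map_add_left_nhds_zero x] at h1
    exact h1
  have key : ∀ s : Set X, ∃ v : Set X, v ∈ 𝓝 (0 : X) ∧ (s ∈ 𝓝 (0 : X) → v + v ⊆ s) := by
    intro s
    by_cases hs : s ∈ 𝓝 (0 : X)
    · obtain ⟨v, hv, hvv⟩ := exists_nhds_zero_half hs
      exact ⟨v, hv, fun _ => Set.add_subset_iff.mpr hvv⟩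
    · exact ⟨Set.univ, Filter.univ_mem, fun h => absurd h hs⟩
  choose Φ hΦ1 hΦ2 using key
  set f : ℕ → Set X := fun n => Nat.rec ((x + ·) ⁻¹' V) (fun _ s => Φ s) n with hf
  have hfn : ∀ n, f n ∈ 𝓝 (0 : X) := by
    intro n; induction n with
    | zero => exact hW
    | succ n _ => exact hΦ1 _
  have hsplit : ∀ m, f (m + 1) + f (m + 1) ⊆ f m := fun m => hΦ2 _ (hfn m)
  have h0 : ∀ m, (0 : X) ∈ f m := fun m => mem_of_mem_nhds (hfn m)
  refine ⟨f, Set.univ, hfn, Filter.univ_mem, ?_⟩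
  intro y hy
  obtain ⟨n, hn⟩ := Set.mem_iUnion.mp hy
  have hsub : ∑ i ∈ Finset.range n, (f (i + 1) ∩ (((i : ℝ) + 1) • Set.univ)) ⊆
      ∑ i ∈ Finset.range n, f (0 + 1 + i) := by
    refine sum_sets_mono (fun i => ?_) n
    rw [show 0 + 1 + i = i + 1 by omega]
    exact Set.inter_subset_left
  exact sum_shift f hsplit h0 n 0 (hsub hn)

theorem tau_nhds_iff {X : Type*} [AddCommGroup X] [Module ℝ X]
    {Λ : Type*} [Nonempty Λ] (ρ : SeminormFamily ℝ X Λ)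
    (hbdd : ∀ x : X, BddAbove (Set.range fun l => ρ l x)) (U : Set X) :
    U ∈ @nhds X
        (SeminormFamily.moduleFilterBasis (fun _ : Unit => (⨆ l, ρ l : Seminorm ℝ X))).topology 0 ↔
      ∃ ε > 0, {x : X | ∀ l, ρ l x ≤ ε} ⊆ U := by
  letI := (SeminormFamily.moduleFilterBasis (fun _ : Unit => (⨆ l, ρ l : Seminorm ℝ X))).topology
  have hw : WithSeminorms (fun _ : Unit => (⨆ l, ρ l : Seminorm ℝ X)) := ⟨rfl⟩
  have hbdd' : BddAbove (Set.range ρ) := Seminorm.bddAbove_range_iff.mpr hbdd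
  have happ : ∀ z : X, (⨆ l, ρ l : Seminorm ℝ X) z = ⨆ l, ρ l z := fun z =>
    Seminorm.iSup_apply hbdd'
  rw [hw.mem_nhds_iff]
  constructor
  · rintro ⟨s, r, hr, hsub⟩
    refine ⟨r / 2, by linarith, fun z hz => hsub ?_⟩
    rw [Seminorm.mem_ball_zero]
    have hle : (s.sup fun _ : Unit => (⨆ l, ρ l : Seminorm ℝ X)) ≤
        (⨆ l, ρ l : Seminorm ℝ X) := Finset.sup_le fun b _ => le_rfl
    have h1 := Seminorm.le_def.mp hle z
    have h2 : (⨆ l, ρ l : Seminorm ℝ X) z ≤ r / 2 := by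
      rw [happ z]
      exact ciSup_le fun l => hz l
    linarith
  · rintro ⟨ε, hε, hsub⟩
    refine ⟨({Unit.unit} : Finset Unit), ε, hε, fun z hz => hsub fun l => ?_⟩
    rw [Seminorm.mem_ball_zero, Finset.sup_singleton] at hz
    have h1 : ρ l z ≤ ⨆ l, ρ l z := le_ciSup (hbdd z) l
    rw [← happ z] at h1
    linarith

end Stmt11

open Stmt11 Topology

/-- Let `ρ` be a pointwise bounded, separating family of seminorms with topology `τ'`, and let
`τ` be the topology of the supremum norm `‖x‖ = sup_λ ρ_λ x`.  If the unit ball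
`{x | ∀ λ, ρ λ x ≤ 1}` is `τ'`-compact, then a set `C` is closed in the mixed topology
`γ[τ,τ']` iff `C ∩ rX¹` is `γ[τ,τ']`-closed for every `r > 0`. -/
theorem stmt11 {X : Type*} [AddCommGroup X] [Module ℝ X]
    {Λ : Type*} [Nonempty Λ] (ρ : SeminormFamily ℝ X Λ)
    (hbdd : ∀ x : X, BddAbove (Set.range fun l => ρ l x))
    (hsep : ∀ x : X, (∀ l, ρ l x = 0) → x = 0)
    (hcpt : @IsCompact X ρ.moduleFilterBasis.topology {x : X | ∀ l, ρ l x ≤ 1}) :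
    ∀ C : Set X,
      @IsClosed X (mixedTopology
          (SeminormFamily.moduleFilterBasis (fun _ : Unit => (⨆ l, ρ l : Seminorm ℝ X))).topology
          ρ.moduleFilterBasis.topology) C ↔
        ∀ r : ℝ, 0 < r →
          @IsClosed X (mixedTopology
              (SeminormFamily.moduleFilterBasis (fun _ : Unit => (⨆ l, ρ l : Seminorm ℝ X))).topology
              ρ.moduleFilterBasis.topology)
            (C ∩ {x : X | ∀ l, ρ l x ≤ r}) := by
  classical
  intro C
  set q : SeminormFamily ℝ X Unit := fun _ => (⨆ l, ρ l : Seminorm ℝ X) with hq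
  set t : TopologicalSpace X := q.moduleFilterBasis.topology with ht
  letI t' : TopologicalSpace X := ρ.moduleFilterBasis.topology
  have hw' : WithSeminorms ρ := ⟨rfl⟩
  haveI hg : IsTopologicalAddGroup X := hw'.topologicalAddGroup
  haveI : ContinuousSMul ℝ X := hw'.continuousSMul
  have hbdd' : BddAbove (Set.range ρ) := Seminorm.bddAbove_range_iff.mpr hbdd
  -- the balls
  set B : ℝ → Set X := fun r => {x : X | ∀ l, ρ l x ≤ r} with hB
  -- τ-neighbourhoods of 0 contain the balls
  have htau_nhds : ∀ U : Set X, U ∈ @nhds X t 0 ↔ ∃ ε > 0, B ε ⊆ U := fun U =>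
    tau_nhds_iff ρ hbdd U
  -- τ'-facts about the balls
  have hBclosed : ∀ r : ℝ, IsClosed (B r) := by
    intro r
    have : B r = ⋂ l, (ρ l) ⁻¹' Set.Iic r := by
      ext z; simp [hB, Set.mem_iInter]
    rw [this]
    exact isClosed_iInter fun l => (IsClosed.preimage (hw'.continuous_seminorm l) isClosed_Iic)
  have hBcpt : ∀ r : ℝ, 0 < r → IsCompact (B r) := by
    intro r hr
    have : B r = r • B 1 := by
      ext z
      rw [Set.mem_smul_set_iff_inv_smul_mem₀ hr.ne']
      constructor
      · intro hz l
        have h1 : ρ l (r⁻¹ • z) ≤ 1 := by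
          have := hz l
          rw [map_smul_eq_mul, Real.norm_eq_abs, abs_of_pos (inv_pos.mpr hr)]
          rw [inv_mul_le_iff₀ hr, mul_one]
          exact this
        exact h1
      · intro hz l
        have := hz l
        rw [map_smul_eq_mul, Real.norm_eq_abs, abs_of_pos (inv_pos.mpr hr),
          inv_mul_le_iff₀ hr, mul_one] at this
        exact this
    rw [this]
    exact hcpt.smul r
  have hγ_of_closed : ∀ D : Set X, IsClosed D → @IsClosed X (mixedTopology t t') D := by
    intro D hD
    rw [← @isOpen_compl_iff X D (mixedTopology t t')]
    exact (isOpen_mixed_iff t t' _).mpr (mem_mixGen_of_open hg t hD.isOpen_compl)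
  -- Key: a γ-closed subset of a ball is τ'-closed
  have key : ∀ (D : Set X) (r : ℝ), D ⊆ B r → @IsClosed X (mixedTopology t t') D → IsClosed D := by
    intro D r hDr hDγ
    rw [← isOpen_compl_iff]
    rw [← @isOpen_compl_iff X D (mixedTopology t t')] at hDγ
    have hgen := (isOpen_mixed_iff t t' _).mp hDγ
    rw [isOpen_iff_mem_nhds]
    intro x hx
    by_cases hxr : ∀ l, ρ l x ≤ r
    · obtain ⟨U', U, hU', hU, hsub⟩ := hgen x hx
      obtain ⟨ε, hε, hεU⟩ := (htau_nhds U).mp hU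
      set k : ℕ := ⌈2 * r / ε⌉₊ with hk
      have hxk : ((k : ℝ) + 1) ≠ 0 := by positivity
      have hmem : ∀ y ∈ U' (k + 1), x + y ∈ Dᶜ := by
        intro y hy
        by_contra hcon
        rw [Set.notMem_compl_iff] at hcon
        -- then y is small in norm
        have hyr : ∀ l, ρ l y ≤ 2 * r := by
          intro l
          have h1 : ρ l (x + y - x) ≤ ρ l (x + y) + ρ l x := map_sub_le_add _ _ _
          rw [add_sub_cancel_left] at h1
          have h2 : ρ l (x + y) ≤ r := hDr hcon l
          linarith [hxr l]
        have hyU : y ∈ ((k : ℝ) + 1) • U := by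
          refine Set.smul_set_mono hεU ?_
          rw [Set.mem_smul_set_iff_inv_smul_mem₀ hxk]
          intro l
          rw [map_smul_eq_mul, Real.norm_eq_abs, abs_of_pos (by positivity),
            inv_mul_le_iff₀ (by positivity)]
          calc ρ l y ≤ 2 * r := hyr l
            _ ≤ ((k : ℝ) + 1) * ε := by
                have h1 : 2 * r / ε ≤ (k : ℝ) := Nat.le_ceil _
                rw [div_le_iff₀ hε] at h1
                nlinarith [Nat.le_ceil (2 * r / ε), hε]
        have hymix : y ∈ mixBall U' U := by
          refine Set.mem_iUnion.mpr ⟨k + 1, ?_⟩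
          refine single_subset_sum_sets (fun i => ?_) (Nat.lt_succ_self k) ⟨hy, hyU⟩
          refine ⟨mem_of_mem_nhds (hU' (i + 1)), ?_⟩
          refine ⟨0, ?_, smul_zero _⟩
          exact hεU (by intro l; simpa using le_of_lt hε)
        exact (hsub y hymix) hcon
      have : Dᶜ ∈ 𝓝 x := by
        rw [← map_add_left_nhds_zero x, Filter.mem_map]
        exact Filter.mem_of_superset (hU' (k + 1)) hmem
      exact this
    · push_neg at hxr
      obtain ⟨l, hl⟩ := hxr
      have hopen : IsOpen {z : X | r < ρ l z} :=
        isOpen_lt continuous_const (hw'.continuous_seminorm l)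
      refine Filter.mem_of_superset (hopen.mem_nhds hl) ?_
      intro z hz hzD
      exact absurd (hDr hzD l) (not_le.mpr hz)
  constructor
  · intro hC r hr
    have h2 : @IsClosed X (mixedTopology t t') (B r) := hγ_of_closed _ (hBclosed r)
    exact @IsClosed.inter X _ _ (mixedTopology t t') hC h2
  · intro h
    rw [← @isOpen_compl_iff X C (mixedTopology t t')]
    rw [isOpen_mixed_iff t t']
    intro x hx
    rw [Set.mem_compl_iff] at hx
    obtain ⟨m, hm⟩ := hbdd x
    set M : ℝ := max m 1 with hM
    have hM1 : (1 : ℝ) ≤ M := le_max_right _ _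
    have hMx : ∀ l, ρ l x ≤ M :=
      fun l => le_trans (hm (Set.mem_range_self l)) (le_max_left _ _)
    set R : ℕ → ℝ := fun n => M + n * n with hR
    have hRpos : ∀ n : ℕ, 0 < R n := by
      intro n; have : (0:ℝ) ≤ (n:ℝ) * n := by positivity
      simp only [hR]; nlinarith
    have hRstep : ∀ n : ℕ, R n + ((n : ℝ) + 1) ≤ R (n + 1) := by
      intro n; simp only [hR]; push_cast; nlinarith [Nat.cast_nonneg (α := ℝ) n]
    have hKclosed : ∀ n : ℕ, IsClosed (C ∩ B (R (n + 1))) :=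
      fun n => key _ _ Set.inter_subset_right (h _ (hRpos (n + 1)))
    -- separation choice function
    have sep : ∀ (n : ℕ) (A : Set X), ∃ V : Set X, V ∈ 𝓝 (0 : X) ∧ IsClosed V ∧
        (IsCompact A → A ∩ C = ∅ → (A + V) ∩ (C ∩ B (R (n + 1))) = ∅) := by
      intro n A
      by_cases hA : IsCompact A ∧ A ∩ C = ∅
      · have hsub : A ⊆ (C ∩ B (R (n + 1)))ᶜ := by
          intro a ha hmem
          exact absurd (Set.eq_empty_iff_forall_notMem.mp hA.2 a ⟨ha, hmem.1⟩) (by simp)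
        obtain ⟨V, hV, hAV⟩ :=
          compact_open_separated_add_right hA.1 (hKclosed n).isOpen_compl hsub
        obtain ⟨V', hV', hV'c, hV'V⟩ := exists_mem_nhds_isClosed_subset hV
        refine ⟨V', hV', hV'c, fun _ _ => ?_⟩
        rw [Set.eq_empty_iff_forall_notMem]
        intro z hz
        exact (hAV (Set.add_subset_add_left hV'V hz.1)) hz.2
      · exact ⟨Set.univ, Filter.univ_mem, isClosed_univ, fun h1 h2 => absurd ⟨h1, h2⟩ hA⟩
    choose Φ hΦn hΦc hΦsep using sep
    -- the recursively defined compact sets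
    set A : ℕ → Set X := fun n =>
      Nat.rec {x} (fun n An => An + (Φ n An ∩ (((n : ℝ) + 1) • B 1))) n with hA
    have hAsucc : ∀ n, A (n + 1) = A n + (Φ n (A n) ∩ (((n : ℝ) + 1) • B 1)) := fun n => rfl
    have hInv : ∀ n, IsCompact (A n) ∧ A n ∩ C = ∅ ∧ A n ⊆ B (R n) := by
      intro n
      induction n with
      | zero =>
          have hA0 : A 0 = {x} := rfl
          rw [hA0]
          refine ⟨isCompact_singleton, ?_, ?_⟩
          · rw [Set.singleton_inter_eq_empty]; exact hx
          · intro z hz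
            rw [Set.mem_singleton_iff] at hz; subst hz
            intro l; simpa [hR] using hMx l
      | succ n ih =>
          obtain ⟨ihc, ihd, ihb⟩ := ih
          have hScpt : IsCompact (Φ n (A n) ∩ (((n : ℝ) + 1) • B 1)) :=
            ((hBcpt 1 one_pos).smul ((n : ℝ) + 1)).inter_left (hΦc n (A n))
          have hc : IsCompact (A (n + 1)) := by
            rw [hAsucc]; exact ihc.add hScpt
          have hb : A (n + 1) ⊆ B (R (n + 1)) := by
            rw [hAsucc]
            rintro z hz
            rw [Set.mem_add] at hz
            obtain ⟨a, ha, s, hs, rfl⟩ := hz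
            intro l
            have h1 : ρ l a ≤ R n := ihb ha l
            have h2 : ρ l s ≤ (n : ℝ) + 1 := by
              obtain ⟨b, hb', rfl⟩ := hs.2
              rw [map_smul_eq_mul, Real.norm_eq_abs, abs_of_pos (by positivity)]
              have := hb' l
              nlinarith [apply_nonneg (ρ l) b, Nat.cast_nonneg (α := ℝ) n]
            calc ρ l (a + s) ≤ ρ l a + ρ l s := map_add_le_add _ _ _
              _ ≤ R n + ((n : ℝ) + 1) := by linarith
              _ ≤ R (n + 1) := hRstep n
          refine ⟨hc, ?_, hb⟩
          rw [Set.eq_empty_iff_forall_notMem]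
          intro z hz
          have hz1 : z ∈ A n + Φ n (A n) := by
            have := hz.1
            rw [hAsucc] at this
            exact Set.add_subset_add_left Set.inter_subset_left this
          have hz2 : z ∈ C ∩ B (R (n + 1)) := ⟨hz.2, hb hz.1⟩
          exact Set.eq_empty_iff_forall_notMem.mp (hΦsep n (A n) ihc ihd) z ⟨hz1, hz2⟩
    refine ⟨fun m => Φ (m - 1) (A (m - 1)), B 1, fun m => hΦn _ _, ?_, ?_⟩
    · exact (htau_nhds (B 1)).mpr ⟨1, one_pos, subset_rfl⟩
    · intro y hy
      obtain ⟨n, hn⟩ := Set.mem_iUnion.mp hy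
      have hmem : ∀ (n : ℕ), ∀ y ∈ ∑ i ∈ Finset.range n,
          (Φ (i + 1 - 1) (A (i + 1 - 1)) ∩ (((i : ℝ) + 1) • B 1)), x + y ∈ A n := by
        intro n
        induction n with
        | zero =>
            intro y hy
            simp only [Finset.range_zero, Finset.sum_empty] at hy
            rw [Set.mem_zero] at hy; subst hy
            simp [hA]
        | succ n ih =>
            intro y hy
            rw [Finset.sum_range_succ, Set.mem_add] at hy
            obtain ⟨z, hz, w, hw, rfl⟩ := hy
            rw [hAsucc, ← add_assoc]
            refine Set.add_mem_add (ih z hz) ?_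
            simpa using hw
      have hxy : x + y ∈ A n := hmem n y hn
      intro hyC
      exact Set.eq_empty_iff_forall_notMem.mp (hInv n).2.1 (x + y) ⟨hxy, hyC⟩
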